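/- Let κ be a regular uncountable cardinal, let D be a normal filter on κ, and let f : κ → Ord. Then J[f,D] := {Z ⊆ κ : κ∖Z ∈ D, or (Z ∉ D and rk_{D+Z}(f) > rk_D(f))} is a normal ideal on κ disjoint from D; in particular J[f,D] is downward closed, closed under diagonal unions ∇_{i<κ} A_i = {j < κ : ∃ i < j, j ∈ A_i} of κ-sequences of its members, and no member of J[f,D] belongs to D. -/

import Mathlib

open scoped Classical

open Cardinal

/-- The set of ordinals below `κ`, as a type. -/
def below (κ : Cardinal) : Type _ := {α : Ordinal // α < κ.ord}

/-- `g <_D f` iff `{y : g y < f y} ∈ D`. -/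
def ltD {Y : Type*} (D : Filter Y) (g f : Y → Ordinal) : Prop :=
  {y | g y < f y} ∈ D

/-- The rank `rk_D(f)` of `f : Y → Ord` in the well-founded relation `<_D`
(defined as `0` in the degenerate case where `<_D` is not well-founded). -/
noncomputable def rkD {Y : Type*} (D : Filter Y) (f : Y → Ordinal) : Ordinal :=
  if h : WellFounded (ltD D) then (h.apply f).rank else 0

/-- `J[f,D] = {Z ⊆ Y : Y∖Z ∈ D, or (Z ∉ D and rk_{D+Z}(f) > rk_D(f))}`,
where `D+Z` is the filter generated by `D ∪ {Z}`. -/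
noncomputable def JfD {Y : Type*} (D : Filter Y) (f : Y → Ordinal) : Set (Set Y) :=
  {Z | Zᶜ ∈ D ∨ (Z ∉ D ∧ rkD D f < rkD (D ⊓ Filter.principal Z) f)}

section Aux

universe u v

variable {Y : Type u}

open Filter

theorem wf_ltD (F : Filter Y) [CountableInterFilter F] [F.NeBot] :
    @WellFounded (Y → Ordinal.{v}) (ltD F) := by
  constructor
  intro a
  by_contra ha
  have step : ∀ x : Y → Ordinal.{v}, ¬ Acc (ltD F) x →
      ∃ y, ltD F y x ∧ ¬ Acc (ltD F) y := by
    intro x hx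
    by_contra h
    push_neg at h
    exact hx (Acc.intro x fun y hy => (h y hy))
  let seq : ℕ → {x : Y → Ordinal.{v} // ¬ Acc (ltD F) x} := fun n =>
    Nat.rec ⟨a, ha⟩ (fun _ p => ⟨(step p.1 p.2).choose, (step p.1 p.2).choose_spec.2⟩) n
  have hseq : ∀ n, ltD F (seq (n + 1)).1 (seq n).1 := fun n =>
    (step (seq n).1 (seq n).2).choose_spec.1
  have h2 : (⋂ n : ℕ, {y | (seq (n + 1)).1 y < (seq n).1 y}) ∈ F :=
    countable_iInter_mem.2 hseq
  obtain ⟨y, hy⟩ := Filter.nonempty_of_mem h2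
  simp only [Set.mem_iInter, Set.mem_setOf_eq] at hy
  obtain ⟨o, ⟨n, rfl⟩, hmin⟩ := Ordinal.lt_wf.has_min (Set.range fun n => (seq n).1 y)
    ⟨(seq 0).1 y, 0, rfl⟩
  exact hmin ((seq (n + 1)).1 y) ⟨n + 1, rfl⟩ (hy n)

variable {F G : Filter Y} {f g : Y → Ordinal.{v}} {ξ η : Ordinal}

theorem rkD_eq (hwf : @WellFounded (Y → Ordinal.{v}) (ltD F)) (f : Y → Ordinal.{v}) :
    rkD F f = (hwf.apply f).rank := dif_pos hwf

theorem rkD_lt_of_ltD (hwf : @WellFounded (Y → Ordinal.{v}) (ltD F))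
    (h : ltD F g f) : rkD F g < rkD F f := by
  rw [rkD_eq hwf g, rkD_eq hwf f]
  exact Acc.rank_lt_of_rel (hwf.apply f) h

theorem rkD_le_of_imp (hwf : @WellFounded (Y → Ordinal.{v}) (ltD F))
    (H : ∀ h, ltD F h f → ltD F h g) : rkD F f ≤ rkD F g := by
  rw [rkD_eq hwf f, rkD_eq hwf g, Acc.rank_eq]
  refine Ordinal.iSup_le_iff.2 ?_
  rintro ⟨c, hc⟩
  exact Order.succ_le_of_lt (Acc.rank_lt_of_rel (hwf.apply g) (H c hc))

theorem rkD_congr (hwf : @WellFounded (Y → Ordinal.{v}) (ltD F))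
    (h : {y | f y = g y} ∈ F) : rkD F f = rkD F g := by
  have key : ∀ (f g : Y → Ordinal.{v}), {y | f y = g y} ∈ F →
      ∀ h, ltD F h f → ltD F h g := by
    intro f g hfg h hlt
    refine Filter.mem_of_superset (Filter.inter_mem hfg hlt) ?_
    rintro y ⟨h1, h2⟩
    simp only [Set.mem_setOf_eq] at *
    exact h1 ▸ h2
  refine le_antisymm (rkD_le_of_imp hwf (key f g h)) (rkD_le_of_imp hwf (key g f ?_))
  exact Filter.mem_of_superset h fun y hy => hy.symm

theorem rkD_mono (hFG : F ≤ G) (hF : @WellFounded (Y → Ordinal.{v}) (ltD F))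
    (hG : @WellFounded (Y → Ordinal.{v}) (ltD G)) (f : Y → Ordinal.{v}) :
    rkD G f ≤ rkD F f := by
  rw [rkD_eq hF f, rkD_eq hG f]
  induction f using hF.induction with
  | _ f IH =>
    rw [Acc.rank_eq]
    refine Ordinal.iSup_le_iff.2 ?_
    rintro ⟨c, hc⟩
    have hcF : ltD F c f := hFG hc
    calc Order.succ (((hG.apply f).inv hc).rank)
        = Order.succ ((hG.apply c).rank) := rfl
      _ ≤ Order.succ ((hF.apply c).rank) := Order.succ_le_succ (IH c hcF)
      _ ≤ (hF.apply f).rank := Order.succ_le_of_lt (Acc.rank_lt_of_rel (hF.apply f) hcF)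

theorem rkD_witness (hwf : @WellFounded (Y → Ordinal.{v}) (ltD F))
    (h : η < rkD F f) : ∃ g, ltD F g f ∧ η ≤ rkD F g := by
  rw [rkD_eq hwf f, Acc.rank_eq, Ordinal.lt_iSup_iff] at h
  obtain ⟨⟨g, hg⟩, hlt⟩ := h
  refine ⟨g, hg, ?_⟩
  rw [rkD_eq hwf g]
  exact Order.lt_succ_iff.1 hlt

theorem rkD_ge (hwf : @WellFounded (Y → Ordinal.{v}) (ltD F))
    (H : ∀ η < ξ, ∃ g, ltD F g f ∧ η ≤ rkD F g) : ξ ≤ rkD F f := by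
  by_contra hcon
  push_neg at hcon
  obtain ⟨g, hg, hge⟩ := H (rkD F f) hcon
  exact absurd (rkD_lt_of_ltD hwf hg) (not_lt.2 hge)

theorem inf_principal_inter_of_mem {Z T : Set Y} (hT : T ∈ F) :
    F ⊓ 𝓟 (Z ∩ T) = F ⊓ 𝓟 Z := by
  ext s
  simp only [Filter.mem_inf_principal]
  constructor
  · intro h
    filter_upwards [h, hT] with x hx hxT hxZ
    exact hx ⟨hxZ, hxT⟩
  · intro h
    filter_upwards [h] with x hx hxZT
    exact hx hxZT.1

theorem neBot_inf_principal {Z : Set Y} (hZ : Zᶜ ∉ F) : (F ⊓ 𝓟 Z).NeBot := by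
  rw [Filter.neBot_iff, Ne, Filter.inf_principal_eq_bot]
  exact hZ

end Aux
section Main

universe u v

open Filter

theorem JfD_aux (κ : Cardinal.{u}) (hreg : κ.IsRegular) (hunc : ℵ₀ < κ)
    (D : Filter (below κ)) (hproper : D.NeBot)
    (htail : ∀ α : Ordinal, α < κ.ord → {β : below κ | α ≤ β.1} ∈ D)
    (hdiag : ∀ A : below κ → Set (below κ), (∀ i, A i ∈ D) →
      {j : below κ | ∀ i : below κ, i.1 < j.1 → j ∈ A i} ∈ D)
    (f : below κ → Ordinal.{v}) :
    ∅ ∈ JfD D f ∧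
    (∀ Z : Set (below κ), (∃ α < κ.ord, ∀ β ∈ Z, β.1 < α) → Z ∈ JfD D f) ∧
    (∀ Z ∈ JfD D f, ∀ W : Set (below κ), W ⊆ Z → W ∈ JfD D f) ∧
    (∀ A : below κ → Set (below κ), (∀ i, A i ∈ JfD D f) →
      {j : below κ | ∃ i : below κ, i.1 < j.1 ∧ j ∈ A i} ∈ JfD D f) ∧
    (∀ Z ∈ JfD D f, Z ∉ D) := by
  classical
  haveI := hproper
  have homega : (Ordinal.omega0 : Ordinal) < κ.ord := by
    have := Cardinal.ord_lt_ord.2 hunc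
    rwa [Cardinal.ord_aleph0] at this
  -- σ-completeness of D
  haveI hcD : CountableInterFilter D := by
    constructor
    intro S hSc hS
    rcases S.eq_empty_or_nonempty with rfl | hSne
    · simp
    obtain ⟨s, rfl⟩ := Set.Countable.exists_eq_range hSc hSne
    rw [Set.sInter_range]
    have hAD : ∀ i : below κ,
        (if h : ∃ n : ℕ, (n : Ordinal) = i.1 then s h.choose else Set.univ) ∈ D := by
      intro i
      by_cases h : ∃ n : ℕ, (n : Ordinal) = i.1
      · rw [dif_pos h]; exact hS _ (Set.mem_range_self _)
      · rw [dif_neg h]; exact Filter.univ_mem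
    have hdg := hdiag _ hAD
    have htl := htail Ordinal.omega0 homega
    refine Filter.mem_of_superset (Filter.inter_mem hdg htl) ?_
    rintro j ⟨hj1, hj2⟩
    simp only [Set.mem_setOf_eq] at hj1 hj2
    rw [Set.mem_iInter]
    intro n
    have hn : (n : Ordinal) < κ.ord := lt_trans (Ordinal.nat_lt_omega0 n) homega
    have hij : (⟨(n : Ordinal), hn⟩ : below κ).1 < j.1 :=
      lt_of_lt_of_le (Ordinal.nat_lt_omega0 n) hj2
    have hmem := hj1 ⟨(n : Ordinal), hn⟩ hij
    have hex : ∃ m : ℕ, (m : Ordinal) = (⟨(n : Ordinal), hn⟩ : below κ).1 := ⟨n, rfl⟩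
    rw [dif_pos hex] at hmem
    have heq : s hex.choose = s n := by
      have h2 : ((hex.choose : ℕ) : Ordinal) = ((n : ℕ) : Ordinal) := hex.choose_spec
      exact congrArg s (Nat.cast_inj.1 h2)
    rwa [← heq]
  -- well-foundedness
  have hwfD : @WellFounded (below κ → Ordinal.{v}) (ltD D) := wf_ltD D
  have hwfZ : ∀ Z : Set (below κ), Zᶜ ∉ D →
      @WellFounded (below κ → Ordinal.{v}) (ltD (D ⊓ 𝓟 Z)) := by
    intro Z hZ
    haveI := neBot_inf_principal (F := D) hZ
    exact wf_ltD _
  -- positivity from rank increase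
  have hpos : ∀ (Z : Set (below κ)) (g : below κ → Ordinal.{v}),
      rkD D f < rkD (D ⊓ 𝓟 Z) g → Zᶜ ∉ D := by
    intro Z g h hc
    rw [Filter.inf_principal_eq_bot.2 hc] at h
    have hnwf : ¬ @WellFounded (below κ → Ordinal.{v}) (ltD (⊥ : Filter (below κ))) := by
      intro hw
      exact (hw.isIrrefl).irrefl g (Filter.mem_bot (s := {y | g y < g y}))
    have h0 : rkD (⊥ : Filter (below κ)) g = 0 := dif_neg hnwf
    rw [h0] at h
    exact not_lt_zero h
  -- the partition lemma
  have partition : ∀ (C : Set (below κ)) (Zi : below κ → Set (below κ)) (Z : Set (below κ)),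
      Zᶜ ∉ D →
      (∀ i ∈ C, (Zi i)ᶜ ∉ D) →
      (∀ i ∈ C, ∀ j ∈ Zi i, i.1 < j.1) →
      (∀ i ∈ C, ∀ i' ∈ C, ∀ j, j ∈ Zi i → j ∈ Zi i' → i = i') →
      (∀ j ∈ Z, ∃ i ∈ C, j ∈ Zi i) →
      ∀ (ξ : Ordinal) (g : below κ → Ordinal.{v}),
        (∀ i ∈ C, ξ ≤ rkD (D ⊓ 𝓟 (Zi i)) g) →
        ξ ≤ rkD (D ⊓ 𝓟 Z) g := by
    intro C Zi Z hZ hZi hlt hdisj hcover ξ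
    induction ξ using Ordinal.induction with
    | _ ξ IH =>
      intro g hg
      refine rkD_ge (hwfZ Z hZ) ?_
      intro η hη
      have hwit : ∀ i : below κ, i ∈ C →
          ∃ gi, ltD (D ⊓ 𝓟 (Zi i)) gi g ∧ η ≤ rkD (D ⊓ 𝓟 (Zi i)) gi := by
        intro i hi
        exact rkD_witness (hwfZ _ (hZi i hi)) (lt_of_lt_of_le hη (hg i hi))
      choose Gi hGi1 hGi2 using hwit
      set g' : below κ → Ordinal.{v} := fun j =>
        if h : ∃ i, ∃ hi : i ∈ C, j ∈ Zi i then Gi h.choose h.choose_spec.choose j else 0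
        with hg'def
      have hkey : ∀ i (hi : i ∈ C), ∀ j ∈ Zi i, g' j = Gi i hi j := by
        intro i hi j hj
        have h : ∃ i, ∃ hi : i ∈ C, j ∈ Zi i := ⟨i, hi, hj⟩
        rw [hg'def]
        simp only
        rw [dif_pos h]
        have : h.choose = i := hdisj _ h.choose_spec.choose i hi j h.choose_spec.choose_spec hj
        subst this
        rfl
      have hcongr : ∀ i (hi : i ∈ C),
          rkD (D ⊓ 𝓟 (Zi i)) g' = rkD (D ⊓ 𝓟 (Zi i)) (Gi i hi) := by
        intro i hi
        refine rkD_congr (hwfZ _ (hZi i hi)) ?_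
        rw [Filter.mem_inf_principal]
        exact Filter.univ_mem' (fun j hj => hkey i hi j hj)
      have hrkg' : η ≤ rkD (D ⊓ 𝓟 Z) g' := by
        refine IH η hη g' ?_
        intro i hi
        rw [hcongr i hi]
        exact hGi2 i hi
      refine ⟨g', ?_, hrkg'⟩
      -- g' <_{D+Z} g
      have hBD : ∀ i : below κ,
          (if h : i ∈ C then {x | x ∈ Zi i → Gi i h x < g x} else Set.univ) ∈ D := by
        intro i
        by_cases h : i ∈ C
        · rw [dif_pos h]
          exact Filter.mem_inf_principal.1 (hGi1 i h)
        · rw [dif_neg h]; exact Filter.univ_mem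
      have hT := hdiag _ hBD
      rw [ltD, Filter.mem_inf_principal]
      refine Filter.mem_of_superset hT ?_
      intro x hx hxZ
      obtain ⟨i, hi, hxi⟩ := hcover x hxZ
      have hix : i.1 < x.1 := hlt i hi x hxi
      have := hx i hix
      rw [dif_pos hi] at this
      have hgx : Gi i hi x < g x := this hxi
      rw [Set.mem_setOf_eq, hkey i hi x hxi]
      exact hgx
  -- Part 1
  refine ⟨Or.inl (by rw [Set.compl_empty]; exact Filter.univ_mem), ?_, ?_, ?_, ?_⟩
  -- Part 2
  · rintro Z ⟨α, hα, hb⟩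
    exact Or.inl (Filter.mem_of_superset (htail α hα)
      (fun β hβ hZβ => absurd (hb β hZβ) (not_lt.2 hβ)))
  -- Part 3
  · rintro Z (hZc | ⟨hZD, hrk⟩) W hWZ
    · exact Or.inl (Filter.mem_of_superset hZc (Set.compl_subset_compl.2 hWZ))
    · by_cases hWc : Wᶜ ∈ D
      · exact Or.inl hWc
      · have hZcompl : Zᶜ ∉ D := hpos Z f hrk
        refine Or.inr ⟨fun hWD => hZD (Filter.mem_of_superset hWD hWZ), ?_⟩
        exact lt_of_lt_of_le hrk (rkD_mono
          (inf_le_inf_left D (Filter.principal_mono.2 hWZ)) (hwfZ W hWc) (hwfZ Z hZcompl) f)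
  -- Part 4
  · intro A hA
    by_cases hZc : {j : below κ | ∃ i : below κ, i.1 < j.1 ∧ j ∈ A i}ᶜ ∈ D
    · exact Or.inl hZc
    set Z := {j : below κ | ∃ i : below κ, i.1 < j.1 ∧ j ∈ A i} with hZdef
    set sel : below κ → below κ := fun j =>
      if h : ∃ i : below κ, i.1 < j.1 ∧ j ∈ A i then h.choose else j with hseldef
    have hsel1 : ∀ j ∈ Z, (sel j).1 < j.1 ∧ j ∈ A (sel j) := by
      intro j hj
      have h : ∃ i : below κ, i.1 < j.1 ∧ j ∈ A i := hj
      rw [hseldef]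
      simp only
      rw [dif_pos h]
      exact h.choose_spec
    set Zi : below κ → Set (below κ) := fun i => {j | j ∈ Z ∧ sel j = i} with hZidef
    set C : Set (below κ) := {i | (Zi i)ᶜ ∉ D} with hCdef
    have hBD : ∀ i : below κ, (if i ∈ C then Set.univ else (Zi i)ᶜ) ∈ D := by
      intro i
      by_cases h : i ∈ C
      · rw [if_pos h]; exact Filter.univ_mem
      · rw [if_neg h]
        exact not_not.1 h
    have hT := hdiag _ hBD
    set T := {j : below κ | ∀ i : below κ, i.1 < j.1 →
      j ∈ (if i ∈ C then Set.univ else (Zi i)ᶜ)} with hTdef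
    have hZT : (Z ∩ T)ᶜ ∉ D := by
      intro h
      refine hZc (Filter.mem_of_superset (Filter.inter_mem h hT) ?_)
      rintro x ⟨hx1, hx2⟩ hxZ
      exact hx1 ⟨hxZ, hx2⟩
    have hselC : ∀ j ∈ Z ∩ T, sel j ∈ C := by
      rintro j ⟨hj1, hj2⟩
      by_contra hsC
      have hlt := (hsel1 j hj1).1
      have := hj2 (sel j) hlt
      rw [if_neg hsC] at this
      exact this ⟨hj1, rfl⟩
    have hZi'pos : ∀ i ∈ C, (Zi i ∩ T)ᶜ ∉ D := by
      intro i hi h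
      refine hi (Filter.mem_of_superset (Filter.inter_mem h hT) ?_)
      rintro x ⟨hx1, hx2⟩ hxZi
      exact hx1 ⟨hxZi, hx2⟩
    have hsubA : ∀ i, Zi i ∩ T ⊆ A i := by
      rintro i j ⟨⟨hjZ, hjsel⟩, _⟩
      have := (hsel1 j hjZ).2
      rwa [hjsel] at this
    have hApos : ∀ i ∈ C, (A i)ᶜ ∉ D := by
      intro i hi h
      exact hZi'pos i hi (Filter.mem_of_superset h
        (Set.compl_subset_compl.2 (hsubA i)))
    have hrkA : ∀ i ∈ C, Order.succ (rkD D f) ≤ rkD (D ⊓ 𝓟 (Zi i ∩ T)) f := by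
      intro i hi
      rcases hA i with hAc | ⟨_, hrk⟩
      · exact absurd hAc (hApos i hi)
      · refine Order.succ_le_of_lt (lt_of_lt_of_le hrk ?_)
        exact rkD_mono (inf_le_inf_left D (Filter.principal_mono.2 (hsubA i)))
          (hwfZ _ (hZi'pos i hi)) (hwfZ _ (hApos i hi)) f
    have hfin : Order.succ (rkD D f) ≤ rkD (D ⊓ 𝓟 (Z ∩ T)) f := by
      refine partition C (fun i => Zi i ∩ T) (Z ∩ T) hZT hZi'pos ?_ ?_ ?_
        (Order.succ (rkD D f)) f hrkA
      · rintro i hi j ⟨⟨hjZ, hjsel⟩, _⟩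
        have := (hsel1 j hjZ).1
        rwa [hjsel] at this
      · rintro i hi i' hi' j ⟨⟨_, h1⟩, _⟩ ⟨⟨_, h2⟩, _⟩
        rw [← h1, ← h2]
      · rintro j hj
        exact ⟨sel j, hselC j hj, ⟨⟨hj.1, rfl⟩, hj.2⟩⟩
    rw [inf_principal_inter_of_mem hT] at hfin
    have hrkZ : rkD D f < rkD (D ⊓ 𝓟 Z) f := lt_of_lt_of_le (Order.lt_succ _) hfin
    refine Or.inr ⟨?_, hrkZ⟩
    intro hZD
    rw [inf_of_le_left (Filter.le_principal_iff.2 hZD)] at hrkZ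
    exact lt_irrefl _ hrkZ
  -- Part 5
  · rintro Z (hZc | ⟨hZD, _⟩) hZmem
    · have : (∅ : Set (below κ)) ∈ D := by
        have := Filter.inter_mem hZmem hZc
        rwa [Set.inter_compl_self] at this
      exact Filter.empty_notMem D this
    · exact hZD hZmem

end Main


/-- If `κ` is regular uncountable and `D` is a normal filter on `κ` (proper, containing all
tail sets, closed under diagonal intersections), then `J[f,D]` is a normal ideal on `κ`
disjoint from `D`: it contains `∅` and every bounded subset of `κ`, is downward closed,
is closed under diagonal unions, and no member of it lies in `D`. -/
theorem JfD_normal_ideal (κ : Cardinal) (hreg : κ.IsRegular) (hunc : ℵ₀ < κ)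
    (D : Filter (below κ)) (hproper : D.NeBot)
    (htail : ∀ α : Ordinal, α < κ.ord → {β : below κ | α ≤ β.1} ∈ D)
    (hdiag : ∀ A : below κ → Set (below κ), (∀ i, A i ∈ D) →
      {j : below κ | ∀ i : below κ, i.1 < j.1 → j ∈ A i} ∈ D)
    (f : below κ → Ordinal) :
    ∅ ∈ JfD D f ∧
    (∀ Z : Set (below κ), (∃ α < κ.ord, ∀ β ∈ Z, β.1 < α) → Z ∈ JfD D f) ∧
    (∀ Z ∈ JfD D f, ∀ W : Set (below κ), W ⊆ Z → W ∈ JfD D f) ∧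
    (∀ A : below κ → Set (below κ), (∀ i, A i ∈ JfD D f) →
      {j : below κ | ∃ i : below κ, i.1 < j.1 ∧ j ∈ A i} ∈ JfD D f) ∧
    (∀ Z ∈ JfD D f, Z ∉ D) :=
  JfD_aux κ hreg hunc D hproper htail hdiag f
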